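/- arXiv:1512.08904 — 2 statements merged into one kernel-verified Lean document; each statement's English description precedes it below -/
import Mathlib

section
/- Let p be a prime, c ∈ ℚ_p, and k ∈ ℤ. The Fourier transform of the indicator function of the ball B(c, p^k) is given by 1_{B(c,p^k)}^(ξ) = χ(-cξ) · p^k · 1_{B(0,p^{-k})}(ξ), where χ is the standard additive character of ℚ_p. -/
open MeasureTheory ENNReal

noncomputable instance (p : ℕ) [Fact p.Prime] : MeasurableSpace ℚ_[p] := borel _
instance (p : ℕ) [Fact p.Prime] : BorelSpace ℚ_[p] := ⟨rfl⟩

/-- Haar measure on `ℚ_[p]`, normalized so that `ℤ_p` (the closed unit ball) has measure 1. -/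
noncomputable def haarQp (p : ℕ) [Fact p.Prime] : Measure ℚ_[p] :=
  Measure.addHaarMeasure
    ⟨⟨Metric.closedBall 0 1, isCompact_closedBall 0 1⟩,
      ⟨0, by
        rw [mem_interior_iff_mem_nhds]
        exact Metric.closedBall_mem_nhds 0 one_pos⟩⟩

/-- The standard additive character `χ(x) = e^{2πi {x}}` of `ℚ_[p]`, where `{x}` is the
p-adic fractional part of `x`. -/
noncomputable def stdChar (p : ℕ) [hp : Fact p.Prime] (x : ℚ_[p]) : ℂ :=
  let n : ℕ := (-x.valuation).toNat
  let y : ℤ_[p] := ⟨(p : ℚ_[p]) ^ n * x, by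
    by_cases hx : x = 0
    · simp [hx]
    · rw [norm_mul, norm_pow, Padic.norm_p, Padic.norm_eq_zpow_neg_valuation hx]
      have h1 : (1:ℝ) < p := by exact_mod_cast hp.out.one_lt
      have h0 : (0:ℝ) < p := by positivity
      rw [inv_pow, ← zpow_natCast, ← zpow_neg, ← zpow_add₀ (ne_of_gt h0)]
      apply zpow_le_one_of_nonpos₀ h1.le
      have h2 : -x.valuation ≤ ((-x.valuation).toNat : ℤ) := Int.self_le_toNat _
      omega⟩
  Complex.exp (2 * Real.pi * Complex.I * ((y.appr n : ℂ) / (p : ℂ) ^ n))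

variable {p : ℕ} [hp : Fact p.Prime]

lemma exp_frac_eq (a b : ℤ) (m n : ℕ)
    (h : ‖(a : ℚ_[p]) / (p:ℚ_[p])^m - (b : ℚ_[p]) / (p:ℚ_[p])^n‖ ≤ 1) :
    Complex.exp (2 * Real.pi * Complex.I * ((a : ℂ) / (p : ℂ)^m))
      = Complex.exp (2 * Real.pi * Complex.I * ((b : ℂ) / (p : ℂ)^n)) := by
  have hp0 : ((p:ℚ_[p]) : ℚ_[p]) ≠ 0 := Nat.cast_ne_zero.2 hp.out.ne_zero
  set N : ℤ := a * p^n - b * p^m with hN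
  have hNval : ((N : ℚ_[p]) / (p:ℚ_[p])^(m+n)) = (a : ℚ_[p]) / (p:ℚ_[p])^m - (b : ℚ_[p]) / (p:ℚ_[p])^n := by
    rw [hN]
    push_cast
    field_simp
    ring
  have hnormp : ‖(p:ℚ_[p])^(m+n)‖ = (p:ℝ)^(-(m+n:ℕ):ℤ) := by
    rw [norm_pow, Padic.norm_p, inv_pow, ← zpow_natCast, ← zpow_neg]
  have hNnorm : ‖(N : ℚ_[p])‖ ≤ (p:ℝ)^(-(m+n:ℕ):ℤ) := by
    have h2 : ‖(N : ℚ_[p])‖ = ‖(N : ℚ_[p]) / (p:ℚ_[p])^(m+n)‖ * ‖(p:ℚ_[p])^(m+n)‖ := by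
      rw [← norm_mul, div_mul_cancel₀]
      exact pow_ne_zero _ hp0
    rw [h2, hNval, ← hnormp]
    calc _ ≤ 1 * ‖(p:ℚ_[p])^(m+n)‖ := by
            apply mul_le_mul_of_nonneg_right h (norm_nonneg _)
      _ = _ := one_mul _
  obtain ⟨z, hz⟩ := (Padic.norm_int_le_pow_iff_dvd (p := p) N (m+n)).1 hNnorm
  -- in ℂ: a/p^m - b/p^n = z
  have hpC : ((p:ℂ)) ≠ 0 := Nat.cast_ne_zero.2 hp.out.ne_zero
  have hC : (a : ℂ) / (p : ℂ)^m = (b : ℂ) / (p : ℂ)^n + (z : ℂ) := by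
    have : ((a * p^n - b * p^m : ℤ) : ℂ) = ((p:ℂ))^(m+n) * z := by
      exact_mod_cast hz
    field_simp at this ⊢
    push_cast at this ⊢
    linear_combination this
  rw [hC, mul_add, Complex.exp_add]
  have : Complex.exp (2 * Real.pi * Complex.I * (z:ℂ)) = 1 := by
    rw [show (2 * (Real.pi:ℂ) * Complex.I * (z:ℂ)) = (z:ℂ) * (2 * Real.pi * Complex.I) by ring]
    exact Complex.exp_int_mul_two_pi_mul_I z
  rw [this, mul_one]

lemma approx_bound (x : ℚ_[p]) (n : ℕ) (y : ℤ_[p]) (hy : (y : ℚ_[p]) = (p:ℚ_[p])^n * x) :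
    ‖x - ((y.appr n : ℤ) : ℚ_[p]) / (p:ℚ_[p])^n‖ ≤ 1 := by
  have hp0 : ((p:ℚ_[p])) ≠ 0 := Nat.cast_ne_zero.2 hp.out.ne_zero
  have hpow : ((p:ℚ_[p]))^n ≠ 0 := pow_ne_zero _ hp0
  have h1 : ‖y - (y.appr n : ℤ_[p])‖ ≤ (p:ℝ)^(-(n:ℤ)) :=
    (PadicInt.norm_le_pow_iff_mem_span_pow _ n).2 (PadicInt.appr_spec n y)
  have h2 : ‖((y:ℚ_[p]) - ((y.appr n : ℤ):ℚ_[p]))‖ ≤ (p:ℝ)^(-(n:ℤ)) := by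
    have : ((y - (y.appr n : ℤ_[p]) : ℤ_[p]) : ℚ_[p]) = (y:ℚ_[p]) - ((y.appr n : ℤ):ℚ_[p]) := by
      push_cast; ring
    rw [← this, PadicInt.padic_norm_e_of_padicInt]
    exact h1
  have hxy : x - ((y.appr n : ℤ) : ℚ_[p]) / (p:ℚ_[p])^n
      = ((y:ℚ_[p]) - ((y.appr n : ℤ):ℚ_[p])) / (p:ℚ_[p])^n := by
    rw [hy]; field_simp
  rw [hxy, norm_div]
  have hnp : ‖(p:ℚ_[p])^n‖ = (p:ℝ)^(-(n:ℤ)) := by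
    rw [norm_pow, Padic.norm_p, inv_pow, ← zpow_natCast, ← zpow_neg]
  rw [hnp]
  have hppos : (0:ℝ) < (p:ℝ)^(-(n:ℤ)) := by
    have : (0:ℝ) < p := by exact_mod_cast hp.out.pos
    positivity
  rw [div_le_one hppos]
  exact h2

lemma stdChar_eq_exp (x : ℚ_[p]) (a : ℤ) (m : ℕ)
    (h : ‖x - (a : ℚ_[p]) / (p:ℚ_[p])^m‖ ≤ 1) :
    stdChar p x = Complex.exp (2 * Real.pi * Complex.I * ((a : ℂ) / (p : ℂ)^m)) := by
  have gen : ∀ (n : ℕ) (y : ℤ_[p]), (y : ℚ_[p]) = (p:ℚ_[p])^n * x →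
      Complex.exp (2 * Real.pi * Complex.I * ((y.appr n : ℂ) / (p : ℂ) ^ n))
        = Complex.exp (2 * Real.pi * Complex.I * ((a : ℂ) / (p : ℂ)^m)) := by
    intro n y hy
    have hb := approx_bound x n y hy
    have hnorm : ‖((y.appr n : ℤ) : ℚ_[p]) / (p:ℚ_[p])^n - (a : ℚ_[p]) / (p:ℚ_[p])^m‖ ≤ 1 := by
      have heq : ((y.appr n : ℤ) : ℚ_[p]) / (p:ℚ_[p])^n - (a : ℚ_[p]) / (p:ℚ_[p])^m
          = -(x - ((y.appr n : ℤ) : ℚ_[p]) / (p:ℚ_[p])^n) + (x - (a : ℚ_[p]) / (p:ℚ_[p])^m) := by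
        ring
      rw [heq]
      calc ‖_ + _‖ ≤ max ‖-(x - ((y.appr n : ℤ) : ℚ_[p]) / (p:ℚ_[p])^n)‖
            ‖x - (a : ℚ_[p]) / (p:ℚ_[p])^m‖ := Padic.nonarchimedean _ _
        _ ≤ 1 := by rw [norm_neg]; exact max_le hb h
    have := exp_frac_eq (p:=p) (y.appr n : ℤ) a n m hnorm
    push_cast at this ⊢
    exact this
  simp only [stdChar]
  exact gen _ _ rfl

lemma exists_approx (x : ℚ_[p]) :
    ∃ (a : ℤ) (m : ℕ), ‖x - (a:ℚ_[p])/(p:ℚ_[p])^m‖ ≤ 1 := by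
  set n : ℕ := (-x.valuation).toNat with hn
  have hnorm : ‖(p : ℚ_[p]) ^ n * x‖ ≤ 1 := by
    by_cases hx : x = 0
    · simp [hx]
    · rw [norm_mul, norm_pow, Padic.norm_p, Padic.norm_eq_zpow_neg_valuation hx]
      have h1 : (1:ℝ) < p := by exact_mod_cast hp.out.one_lt
      have h0 : (0:ℝ) < p := by positivity
      rw [inv_pow, ← zpow_natCast, ← zpow_neg, ← zpow_add₀ (ne_of_gt h0)]
      apply zpow_le_one_of_nonpos₀ h1.le
      have h2 : -x.valuation ≤ ((-x.valuation).toNat : ℤ) := Int.self_le_toNat _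
      omega
  let yy : ℤ_[p] := ⟨_, hnorm⟩
  exact ⟨(yy.appr n : ℤ), n, approx_bound x n yy rfl⟩

lemma stdChar_add (x y : ℚ_[p]) : stdChar p (x + y) = stdChar p x * stdChar p y := by
  obtain ⟨a, m, ha⟩ := exists_approx x
  obtain ⟨b, n, hb⟩ := exists_approx y
  have hp0 : ((p:ℚ_[p])) ≠ 0 := Nat.cast_ne_zero.2 hp.out.ne_zero
  have hpC : ((p:ℂ)) ≠ 0 := Nat.cast_ne_zero.2 hp.out.ne_zero
  have haux : ((a * p^n + b * p^m : ℤ) : ℚ_[p])/(p:ℚ_[p])^(m+n)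
      = (a:ℚ_[p])/(p:ℚ_[p])^m + (b:ℚ_[p])/(p:ℚ_[p])^n := by
    rw [div_add_div _ _ (pow_ne_zero m hp0) (pow_ne_zero n hp0), pow_add]
    push_cast
    ring_nf
  have hsum : ‖(x + y) - ((a * p^n + b * p^m : ℤ) : ℚ_[p])/(p:ℚ_[p])^(m+n)‖ ≤ 1 := by
    have heq : (x + y) - ((a * p^n + b * p^m : ℤ) : ℚ_[p])/(p:ℚ_[p])^(m+n)
        = (x - (a:ℚ_[p])/(p:ℚ_[p])^m) + (y - (b:ℚ_[p])/(p:ℚ_[p])^n) := by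
      rw [haux]; ring
    rw [heq]
    calc ‖_ + _‖ ≤ max ‖x - (a:ℚ_[p])/(p:ℚ_[p])^m‖ ‖y - (b:ℚ_[p])/(p:ℚ_[p])^n‖ :=
          Padic.nonarchimedean _ _
      _ ≤ 1 := max_le ha hb
  rw [stdChar_eq_exp x a m ha, stdChar_eq_exp y b n hb,
    stdChar_eq_exp (x+y) (a * p^n + b * p^m) (m+n) hsum, ← Complex.exp_add]
  congr 1
  have : ((a * p^n + b * p^m : ℤ) : ℂ) / (p:ℂ)^(m+n) = (a:ℂ)/(p:ℂ)^m + (b:ℂ)/(p:ℂ)^n := by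
    rw [div_add_div _ _ (pow_ne_zero m hpC) (pow_ne_zero n hpC), pow_add]
    push_cast
    ring_nf
  rw [this]
  ring

lemma stdChar_of_norm_le_one {x : ℚ_[p]} (h : ‖x‖ ≤ 1) : stdChar p x = 1 := by
  have := stdChar_eq_exp x 0 0 (by simpa using h)
  simpa using this

lemma stdChar_inv (x : ℚ_[p]) : (stdChar p x)⁻¹ = stdChar p (-x) := by
  have h : stdChar p (-x) * stdChar p x = 1 := by
    rw [← stdChar_add]
    simp only [neg_add_cancel]
    exact stdChar_of_norm_le_one (by simp)
  exact inv_eq_of_mul_eq_one_left h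

lemma stdChar_pinv : stdChar p ((p:ℚ_[p])⁻¹) = Complex.exp (2 * Real.pi * Complex.I * ((1:ℂ)/(p:ℂ))) := by
  have h : ‖(p:ℚ_[p])⁻¹ - ((1:ℤ):ℚ_[p])/(p:ℚ_[p])^1‖ ≤ 1 := by
    have : (p:ℚ_[p])⁻¹ - ((1:ℤ):ℚ_[p])/(p:ℚ_[p])^1 = 0 := by
      push_cast; rw [pow_one, one_div, sub_self]
    rw [this]; simp
  have := stdChar_eq_exp ((p:ℚ_[p])⁻¹) 1 1 h
  simpa using this

lemma stdChar_pinv_ne_one : stdChar p ((p:ℚ_[p])⁻¹) ≠ 1 := by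
  rw [stdChar_pinv]
  intro hcon
  rw [Complex.exp_eq_one_iff] at hcon
  obtain ⟨z, hz⟩ := hcon
  have hpC : ((p:ℂ)) ≠ 0 := Nat.cast_ne_zero.2 hp.out.ne_zero
  have h2pi : (2 * (Real.pi:ℂ) * Complex.I) ≠ 0 := by
    simp [Real.pi_ne_zero, Complex.I_ne_zero]
  have hzpC : (1:ℂ) = (z:ℂ) * p := by
    apply mul_left_cancel₀ h2pi
    field_simp at hz
    linear_combination (2 * (Real.pi:ℂ) * Complex.I) * hz
  have hzZ : (1:ℤ) = z * p := by exact_mod_cast hzpC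
  have hdvd : (p:ℤ) ∣ 1 := ⟨z, by linarith⟩
  have := Int.le_of_dvd one_pos hdvd
  have hp2 : 2 ≤ p := hp.out.two_le
  omega


instance : (haarQp p).IsAddLeftInvariant := by unfold haarQp; infer_instance
instance : (haarQp p).IsAddRightInvariant := by unfold haarQp; infer_instance
example : MeasurableAdd ℚ_[p] := by infer_instance
example : SecondCountableTopology ℚ_[p] := by infer_instance
instance : SFinite (haarQp p) := by unfold haarQp; infer_instance

lemma haarQp_ball_one : haarQp p (Metric.closedBall 0 1) = 1 :=
  Measure.addHaarMeasure_self

lemma haarQp_closedBall_center (c : ℚ_[p]) (r : ℝ) :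
    haarQp p (Metric.closedBall c r) = haarQp p (Metric.closedBall 0 r) := by
  have : Metric.closedBall c r = (fun x => x + (-c)) ⁻¹' Metric.closedBall 0 r := by
    ext x
    simp [Metric.mem_closedBall, dist_eq_norm, sub_eq_add_neg]
  rw [this, measure_preimage_add_right]

lemma ball_succ_eq_iUnion (k : ℤ) :
    Metric.closedBall (0:ℚ_[p]) ((p:ℝ)^(k+1))
      = ⋃ j : Fin p, Metric.closedBall ((j:ℕ) * (p:ℚ_[p])^(-(k+1))) ((p:ℝ)^k) := by
  have hp0 : ((p:ℚ_[p])) ≠ 0 := Nat.cast_ne_zero.2 hp.out.ne_zero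
  have hp1R : (1:ℝ) < p := by exact_mod_cast hp.out.one_lt
  have hp0R : (0:ℝ) < p := by positivity
  ext x
  simp only [Metric.mem_closedBall, dist_eq_norm, Set.mem_iUnion, sub_zero]
  constructor
  · intro hx
    -- w = p^(k+1) * x has norm ≤ 1
    set w : ℚ_[p] := (p:ℚ_[p])^(k+1) * x with hw
    have hwnorm : ‖w‖ ≤ 1 := by
      rw [hw, norm_mul, Padic.norm_p_zpow]
      calc (p:ℝ)^(-(k+1)) * ‖x‖ ≤ (p:ℝ)^(-(k+1)) * (p:ℝ)^(k+1) := by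
            apply mul_le_mul_of_nonneg_left hx (by positivity)
        _ = 1 := by rw [← zpow_add₀ (ne_of_gt hp0R), neg_add_cancel, zpow_zero]
    set z : ℤ_[p] := ⟨w, hwnorm⟩ with hz
    have hjlt : z.appr 1 < p := by simpa using PadicInt.appr_lt z 1
    refine ⟨⟨z.appr 1, hjlt⟩, ?_⟩
    have h1 : ‖z - (z.appr 1 : ℤ_[p])‖ ≤ (p:ℝ)^(-(1:ℤ)) :=
      (PadicInt.norm_le_pow_iff_mem_span_pow _ 1).2 (PadicInt.appr_spec 1 z)
    have h2 : ‖w - ((z.appr 1 : ℕ) : ℚ_[p])‖ ≤ (p:ℝ)^(-(1:ℤ)) := by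
      have hcoe : ((z - (z.appr 1 : ℤ_[p]) : ℤ_[p]) : ℚ_[p]) = w - ((z.appr 1 : ℕ) : ℚ_[p]) := by
        rfl
      rw [← hcoe, PadicInt.padic_norm_e_of_padicInt]
      exact h1
    have heq : x - ((z.appr 1 : ℕ) : ℚ_[p]) * (p:ℚ_[p])^(-(k+1))
        = (p:ℚ_[p])^(-(k+1)) * (w - ((z.appr 1 : ℕ) : ℚ_[p])) := by
      rw [hw, mul_sub, ← mul_assoc, ← zpow_add₀ hp0, neg_add_cancel, zpow_zero, one_mul,
        mul_comm ((z.appr 1 : ℕ) : ℚ_[p])]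
    simp only [Fin.val_mk]
    rw [heq, norm_mul, Padic.norm_p_zpow, neg_neg]
    calc (p:ℝ)^(k+1) * ‖w - ((z.appr 1 : ℕ) : ℚ_[p])‖ ≤ (p:ℝ)^(k+1) * (p:ℝ)^(-(1:ℤ)) := by
          apply mul_le_mul_of_nonneg_left h2 (by positivity)
      _ = (p:ℝ)^k := by rw [← zpow_add₀ (ne_of_gt hp0R)]; ring_nf
  · rintro ⟨j, hj⟩
    have hcj : ‖((j:ℕ) : ℚ_[p]) * (p:ℚ_[p])^(-(k+1))‖ ≤ (p:ℝ)^(k+1) := by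
      rw [norm_mul, Padic.norm_p_zpow, neg_neg]
      calc ‖((j:ℕ) : ℚ_[p])‖ * (p:ℝ)^(k+1) ≤ 1 * (p:ℝ)^(k+1) := by
            apply mul_le_mul_of_nonneg_right _ (by positivity)
            exact_mod_cast Padic.norm_int_le_one ((j:ℕ) : ℤ)
        _ = _ := one_mul _
    have : x = (x - ((j:ℕ) : ℚ_[p]) * (p:ℚ_[p])^(-(k+1))) + ((j:ℕ) : ℚ_[p]) * (p:ℚ_[p])^(-(k+1)) := by
      ring
    rw [this]
    calc ‖_ + _‖ ≤ max ‖x - ((j:ℕ) : ℚ_[p]) * (p:ℚ_[p])^(-(k+1))‖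
          ‖((j:ℕ) : ℚ_[p]) * (p:ℚ_[p])^(-(k+1))‖ := Padic.nonarchimedean _ _
      _ ≤ (p:ℝ)^(k+1) := by
          apply max_le _ hcj
          calc ‖x - _‖ ≤ (p:ℝ)^k := hj
            _ ≤ (p:ℝ)^(k+1) := by
                apply zpow_le_zpow_right₀ hp1R.le
                omega

lemma haarQp_ball_succ (k : ℤ) :
    haarQp p (Metric.closedBall 0 ((p:ℝ)^(k+1)))
      = p * haarQp p (Metric.closedBall 0 ((p:ℝ)^k)) := by
  have hp1R : (1:ℝ) < p := by exact_mod_cast hp.out.one_lt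
  have hp0R : (0:ℝ) < p := by positivity
  have hdisj : Pairwise (Function.onFun Disjoint
      (fun j : Fin p => Metric.closedBall ((j:ℕ) * (p:ℚ_[p])^(-(k+1))) ((p:ℝ)^k))) := by
    intro i j hij
    rw [Function.onFun, Set.disjoint_left]
    intro x hxi hxj
    simp only [Metric.mem_closedBall, dist_eq_norm] at hxi hxj
    have hdvd : ¬ ((p:ℤ) ∣ ((i:ℕ) - (j:ℕ) : ℤ)) := by
      intro hd
      have hi := i.isLt
      have hj := j.isLt
      have hne : (i:ℕ) ≠ (j:ℕ) := fun h => hij (Fin.ext h)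
      have hne' : ((i:ℕ) - (j:ℕ) : ℤ) ≠ 0 := by omega
      have hp2 : 2 ≤ (p:ℤ) := by exact_mod_cast hp.out.two_le
      have key : (p:ℤ) ≤ |((i:ℕ) - (j:ℕ) : ℤ)| :=
        Int.le_of_dvd (abs_pos.mpr hne') ((dvd_abs _ _).mpr hd)
      rcases abs_cases (((i:ℕ) - (j:ℕ) : ℤ)) with ⟨h1, h2⟩ | ⟨h1, h2⟩ <;> omega
    have hnorm1 : ‖(((i:ℕ) - (j:ℕ) : ℤ) : ℚ_[p])‖ = 1 := by
      apply le_antisymm (Padic.norm_int_le_one _)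
      by_contra hlt
      push_neg at hlt
      exact hdvd ((Padic.norm_intCast_lt_one_iff).1 hlt)
    have hcdiff : ‖((i:ℕ) : ℚ_[p]) * (p:ℚ_[p])^(-(k+1)) - ((j:ℕ) : ℚ_[p]) * (p:ℚ_[p])^(-(k+1))‖
        = (p:ℝ)^(k+1) := by
      rw [← sub_mul, norm_mul, Padic.norm_p_zpow, neg_neg]
      rw [show ((i:ℕ) : ℚ_[p]) - ((j:ℕ) : ℚ_[p]) = (((i:ℕ) - (j:ℕ) : ℤ) : ℚ_[p]) by push_cast; ring]
      rw [hnorm1, one_mul]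
    have hle : ‖((i:ℕ) : ℚ_[p]) * (p:ℚ_[p])^(-(k+1)) - ((j:ℕ) : ℚ_[p]) * (p:ℚ_[p])^(-(k+1))‖
        ≤ (p:ℝ)^k := by
      have heq : ((i:ℕ) : ℚ_[p]) * (p:ℚ_[p])^(-(k+1)) - ((j:ℕ) : ℚ_[p]) * (p:ℚ_[p])^(-(k+1))
          = -(x - ((i:ℕ) : ℚ_[p]) * (p:ℚ_[p])^(-(k+1))) + (x - ((j:ℕ) : ℚ_[p]) * (p:ℚ_[p])^(-(k+1))) := by
        ring
      rw [heq]
      calc ‖_ + _‖ ≤ max ‖-(x - ((i:ℕ) : ℚ_[p]) * (p:ℚ_[p])^(-(k+1)))‖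
            ‖x - ((j:ℕ) : ℚ_[p]) * (p:ℚ_[p])^(-(k+1))‖ := Padic.nonarchimedean _ _
        _ ≤ (p:ℝ)^k := by rw [norm_neg]; exact max_le hxi hxj
    rw [hcdiff] at hle
    have : (p:ℝ)^k < (p:ℝ)^(k+1) := zpow_lt_zpow_right₀ hp1R (by omega)
    linarith
  rw [ball_succ_eq_iUnion k,
    measure_iUnion hdisj (fun j => measurableSet_closedBall)]
  simp_rw [haarQp_closedBall_center]
  rw [tsum_fintype]
  simp [Finset.sum_const, mul_comm]

lemma haarQp_ball (k : ℤ) :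
    haarQp p (Metric.closedBall (0:ℚ_[p]) ((p:ℝ)^k)) = (p:ℝ≥0∞)^k := by
  have hp0 : ((p:ℝ≥0∞)) ≠ 0 := by exact_mod_cast hp.out.ne_zero
  have hptop : ((p:ℝ≥0∞)) ≠ ⊤ := ENNReal.natCast_ne_top p
  induction k using Int.induction_on with
  | zero => simpa using haarQp_ball_one
  | succ i ih =>
      rw [haarQp_ball_succ, ih, ENNReal.zpow_add hp0 hptop i 1]
      simp [mul_comm]
  | pred i ih =>
      have hrec := haarQp_ball_succ (p := p) (-(i:ℤ)-1)
      rw [show (-(i:ℤ)-1)+1 = -(i:ℤ) by ring, ih] at hrec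
      rw [← ENNReal.mul_right_inj hp0 hptop, ← hrec,
        show (-(i:ℤ)) = (-(i:ℤ)-1) + 1 by ring, ENNReal.zpow_add hp0 hptop]
      simp [mul_comm]

/-- The Fourier transform of the indicator of the ball `B(c, p^k)` is
`χ(-cξ) · p^k · 1_{B(0,p^{-k})}(ξ)`. -/
theorem stmt8 (p : ℕ) [Fact p.Prime] (c : ℚ_[p]) (k : ℤ) (ξ : ℚ_[p]) :
    ∫ x, Set.indicator {x : ℚ_[p] | ‖x - c‖ ≤ (p : ℝ) ^ k} (fun _ => (1 : ℂ)) x *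
        (stdChar p (ξ * x))⁻¹ ∂(haarQp p)
      = stdChar p (-(c * ξ)) * (p : ℂ) ^ k *
          Set.indicator {η : ℚ_[p] | ‖η‖ ≤ (p : ℝ) ^ (-k)} (fun _ => (1 : ℂ)) ξ := by
  classical
  have hpp : p.Prime := Fact.out
  have hp0R : (0:ℝ) < p := by exact_mod_cast hpp.pos
  have hp1R : (1:ℝ) < p := by exact_mod_cast hpp.one_lt
  set μ := haarQp p with hμ
  set S : Set ℚ_[p] := {x : ℚ_[p] | ‖x - c‖ ≤ (p : ℝ) ^ k} with hS
  set B : Set ℚ_[p] := {x : ℚ_[p] | ‖x‖ ≤ (p : ℝ) ^ k} with hB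
  set g : ℚ_[p] → ℂ := fun y => (stdChar p (ξ * y))⁻¹ with hg
  have step1 : (∫ x, Set.indicator S (fun _ => (1 : ℂ)) x * (stdChar p (ξ * x))⁻¹ ∂μ)
      = ∫ x, Set.indicator S g x ∂μ := by
    congr 1
    funext x
    by_cases hx : x ∈ S
    · simp [Set.indicator_of_mem hx, hg]
    · simp [Set.indicator_of_notMem hx]
  have step2 : (∫ x, Set.indicator S g x ∂μ) = ∫ x, Set.indicator S g (x + c) ∂μ :=
    (integral_add_right_eq_self (fun x => Set.indicator S g x) c).symm
  have step3 : ∀ x : ℚ_[p], Set.indicator S g (x + c)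
      = stdChar p (-(c * ξ)) * Set.indicator B g x := by
    intro x
    have hmem : (x + c ∈ S) ↔ (x ∈ B) := by
      simp [hS, hB, add_sub_cancel_right]
    by_cases hx : x ∈ B
    · rw [Set.indicator_of_mem (hmem.mpr hx), Set.indicator_of_mem hx]
      simp only [hg]
      rw [stdChar_inv, stdChar_inv,
        show -(ξ * (x + c)) = -(c * ξ) + -(ξ * x) by ring, stdChar_add]
    · rw [Set.indicator_of_notMem (fun h => hx (hmem.mp h)), Set.indicator_of_notMem hx,
        mul_zero]
  have step4 : (∫ x, Set.indicator S g (x + c) ∂μ)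
      = stdChar p (-(c * ξ)) * ∫ x, Set.indicator B g x ∂μ := by
    simp_rw [step3]
    exact integral_const_mul _ _
  rw [step1, step2, step4]
  have hBball : B = Metric.closedBall (0:ℚ_[p]) ((p:ℝ)^k) := by
    ext x
    simp [hB, Metric.mem_closedBall, dist_eq_norm]
  by_cases hxi : ‖ξ‖ ≤ (p : ℝ) ^ (-k)
  · -- main case : integral equals measure of ball
    have hgone : ∀ x : ℚ_[p], x ∈ B → g x = 1 := by
      intro x hx
      have hnorm : ‖ξ * x‖ ≤ 1 := by
        rw [norm_mul]
        calc ‖ξ‖ * ‖x‖ ≤ (p : ℝ)^(-k) * (p : ℝ)^k := by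
              apply mul_le_mul hxi hx (norm_nonneg x) (by positivity)
          _ = 1 := by rw [← zpow_add₀ (ne_of_gt hp0R), neg_add_cancel, zpow_zero]
      simp only [hg]
      rw [stdChar_of_norm_le_one hnorm, inv_one]
    have hindeq : Set.indicator B g = Set.indicator B (fun _ => (1:ℂ)) := by
      funext x
      by_cases hx : x ∈ B
      · rw [Set.indicator_of_mem hx, Set.indicator_of_mem hx, hgone x hx]
      · rw [Set.indicator_of_notMem hx, Set.indicator_of_notMem hx]
    rw [hindeq]
    have hmeas : MeasurableSet B := hBball ▸ measurableSet_closedBall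
    rw [integral_indicator_const (1:ℂ) hmeas]
    have hμB : μ B = (p : ℝ≥0∞) ^ k := by rw [hBball, hμ]; exact haarQp_ball k
    have htoReal : (μ B).toReal = (p : ℝ) ^ k := by
      rw [hμB, ← ENNReal.rpow_intCast, ← ENNReal.toReal_rpow, ENNReal.toReal_natCast,
        Real.rpow_intCast]
    rw [measureReal_def, htoReal]
    rw [Set.indicator_of_mem (by exact hxi : ξ ∈ {η : ℚ_[p] | ‖η‖ ≤ (p : ℝ) ^ (-k)})]
    rw [Complex.real_smul, mul_one, mul_one, Complex.ofReal_zpow]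
    push_cast
    ring
  · -- vanishing case
    rw [Set.indicator_of_notMem (by exact hxi : ξ ∉ {η : ℚ_[p] | ‖η‖ ≤ (p : ℝ) ^ (-k)}),
      mul_zero]
    have hξ0 : ξ ≠ 0 := by
      intro h
      apply hxi
      rw [h, norm_zero]
      positivity
    set v : ℤ := ξ.valuation with hv
    have hnormξ : ‖ξ‖ = (p:ℝ)^(-v) := Padic.norm_eq_zpow_neg_valuation hξ0
    have hvk : v + 1 ≤ k := by
      push_neg at hxi
      rw [hnormξ] at hxi
      have := (zpow_lt_zpow_iff_right₀ hp1R).mp hxi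
      omega
    set t : ℚ_[p] := ξ⁻¹ * (p : ℚ_[p])⁻¹ with ht
    have hp0Q : ((p:ℚ_[p])) ≠ 0 := Nat.cast_ne_zero.2 hpp.ne_zero
    have hξt : ξ * t = (p : ℚ_[p])⁻¹ := by
      rw [ht, ← mul_assoc, mul_inv_cancel₀ hξ0, one_mul]
    have htnorm : ‖t‖ ≤ (p:ℝ)^k := by
      rw [ht, norm_mul, norm_inv, norm_inv, hnormξ, Padic.norm_p,
        ← zpow_neg, neg_neg, inv_inv]
      calc (p:ℝ)^v * (p:ℝ) = (p:ℝ)^(v+1) := by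
            rw [zpow_add_one₀ (ne_of_gt hp0R)]
        _ ≤ (p:ℝ)^k := zpow_le_zpow_right₀ hp1R.le hvk
    have hmemB : ∀ x : ℚ_[p], (x + t ∈ B) ↔ (x ∈ B) := by
      intro x
      constructor
      · intro hx
        have : x = (x + t) + (-t) := by ring
        rw [hB, Set.mem_setOf_eq, this]
        calc ‖(x + t) + (-t)‖ ≤ max ‖x + t‖ ‖-t‖ := Padic.nonarchimedean _ _
          _ ≤ (p:ℝ)^k := max_le hx (by rwa [norm_neg])
      · intro hx
        rw [hB, Set.mem_setOf_eq]
        calc ‖x + t‖ ≤ max ‖x‖ ‖t‖ := Padic.nonarchimedean _ _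
          _ ≤ (p:ℝ)^k := max_le hx htnorm
    have hpointwise : ∀ x : ℚ_[p],
        Set.indicator B g (x + t) = (stdChar p ((p:ℚ_[p])⁻¹))⁻¹ * Set.indicator B g x := by
      intro x
      by_cases hx : x ∈ B
      · rw [Set.indicator_of_mem ((hmemB x).mpr hx), Set.indicator_of_mem hx]
        simp only [hg]
        rw [stdChar_inv, stdChar_inv,
          show -(ξ * (x + t)) = -(ξ * t) + -(ξ * x) by ring, stdChar_add, hξt, stdChar_inv]
      · rw [Set.indicator_of_notMem (fun h => hx ((hmemB x).mp h)),
          Set.indicator_of_notMem hx, mul_zero]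
    have htrans : (∫ x, Set.indicator B g x ∂μ)
        = (stdChar p ((p:ℚ_[p])⁻¹))⁻¹ * ∫ x, Set.indicator B g x ∂μ := by
      conv_lhs => rw [← integral_add_right_eq_self (fun x => Set.indicator B g x) t]
      simp_rw [hpointwise]
      exact integral_const_mul _ _
    have hne : (stdChar p ((p:ℚ_[p])⁻¹))⁻¹ ≠ 1 := by
      intro h
      rw [inv_eq_one] at h
      exact stdChar_pinv_ne_one h
    have hI : (1 - (stdChar p ((p:ℚ_[p])⁻¹))⁻¹) * (∫ x, Set.indicator B g x ∂μ) = 0 := by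
      rw [sub_mul, one_mul]
      exact sub_eq_zero.mpr htrans
    rcases mul_eq_zero.mp hI with h | h
    · exact absurd (by linear_combination -h : (stdChar p ((p:ℚ_[p])⁻¹))⁻¹ = 1) hne
    · rw [h, mul_zero]
end

section
/- Let p be a prime and E ⊂ ℚ_p a uniformly discrete set. If ξ ∈ ℚ_p is a zero of the distribution μ_E^ (the Fourier transform of μ_E = ∑_{λ∈E} δ_λ), then every point ξ' with |ξ'|_p = |ξ|_p is also a zero of μ_E^; that is, the zero set of μ_E^ is a union of spheres centered at 0. -/
open MeasureTheory

/-- `ξ` is a zero of the Bruhat–Schwartz distribution `μ̂_E` (the Fourier transform of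
`μ_E = ∑_{λ∈E} δ_λ`): there is `n₀` such that the pairing of `μ̂_E` against the indicator
of every ball `B(y, p^n)` with `y ∈ B(ξ, p^{n₀})` and `n ≤ n₀` vanishes; by the pairing
formula this means that the character sums `∑_{λ ∈ E ∩ B(0,p^{-n})} χ(yλ)⁻¹` vanish. -/
def IsZeroOfFourierMu (p : ℕ) [Fact p.Prime] (E : Set ℚ_[p]) (ξ : ℚ_[p]) : Prop :=
  ∃ n₀ : ℤ, ∀ y : ℚ_[p], ‖y - ξ‖ ≤ (p : ℝ) ^ n₀ → ∀ n : ℤ, n ≤ n₀ →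
    ∑' l : ↥(E ∩ {x : ℚ_[p] | ‖x‖ ≤ (p : ℝ) ^ (-n)}), (stdChar p (y * l))⁻¹ = 0

variable {p : ℕ} [hp : Fact p.Prime]

lemma stdChar_eq (x : ℚ_[p]) (N : ℕ) (m : ℤ)
    (h : ‖x - m / (p:ℚ_[p])^N‖ ≤ 1) :
    stdChar p x = Complex.exp (2 * Real.pi * Complex.I * ((m:ℂ) / (p:ℂ)^N)) := by
  have hp1 : (1:ℝ) < p := by exact_mod_cast hp.out.one_lt
  have hp0 : (0:ℝ) < p := by positivity
  have hpQ : ((p:ℚ_[p])) ≠ 0 := by exact_mod_cast hp.out.ne_zero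
  have hpC : ((p:ℂ)) ≠ 0 := by exact_mod_cast hp.out.ne_zero
  rw [stdChar]
  set n : ℕ := (-x.valuation).toNat with hn
  set y : ℤ_[p] := ⟨(p : ℚ_[p]) ^ n * x, by
    by_cases hx : x = 0
    · simp [hx]
    · rw [norm_mul, norm_pow, Padic.norm_p, Padic.norm_eq_zpow_neg_valuation hx]
      rw [inv_pow, ← zpow_natCast, ← zpow_neg, ← zpow_add₀ (ne_of_gt hp0)]
      apply zpow_le_one_of_nonpos₀ hp1.le
      have h2 : -x.valuation ≤ ((-x.valuation).toNat : ℤ) := Int.self_le_toNat _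
      omega⟩ with hy
  set a : ℕ := y.appr n with ha
  -- ‖p^n x - a‖ ≤ p^(-n)
  have h1 : ‖(p:ℚ_[p])^n * x - (a:ℚ_[p])‖ ≤ (p:ℝ)^(-(n:ℤ)) := by
    have := (PadicInt.norm_le_pow_iff_mem_span_pow (y - (a:ℤ_[p])) n).mpr
      (PadicInt.appr_spec n y)
    rw [PadicInt.norm_def] at this
    exact this
  have h2 : ‖x - (a:ℚ_[p]) / (p:ℚ_[p])^n‖ ≤ 1 := by
    have hx : x - (a:ℚ_[p]) / (p:ℚ_[p])^n = ((p:ℚ_[p])^n * x - a) / (p:ℚ_[p])^n := by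
      field_simp
    rw [hx, norm_div, norm_pow, Padic.norm_p]
    calc ‖(p:ℚ_[p])^n * x - (a:ℚ_[p])‖ / ((p:ℝ)⁻¹)^n
        ≤ (p:ℝ)^(-(n:ℤ)) / ((p:ℝ)⁻¹)^n := by
          gcongr
      _ = 1 := by
          rw [inv_pow, ← zpow_natCast, ← zpow_neg, div_eq_mul_inv, ← zpow_neg,
            ← zpow_add₀ (ne_of_gt hp0)]
          simp
  have h3 : ‖(a:ℚ_[p]) / (p:ℚ_[p])^n - (m:ℚ_[p]) / (p:ℚ_[p])^N‖ ≤ 1 := by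
    have hsplit : (a:ℚ_[p]) / (p:ℚ_[p])^n - (m:ℚ_[p]) / (p:ℚ_[p])^N
        = ((a:ℚ_[p]) / (p:ℚ_[p])^n - x) + (x - (m:ℚ_[p]) / (p:ℚ_[p])^N) := by ring
    rw [hsplit]
    refine le_trans (Padic.nonarchimedean _ _) (max_le ?_ h)
    rwa [norm_sub_rev] at h2
  have h4 : ((p:ℤ))^(n+N) ∣ ((a:ℤ) * p^N - m * p^n) := by
    rw [← Padic.norm_int_le_pow_iff_dvd]
    have hid : (((a:ℤ) * p^N - m * p^n : ℤ) : ℚ_[p])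
        = ((a:ℚ_[p]) / (p:ℚ_[p])^n - (m:ℚ_[p]) / (p:ℚ_[p])^N) * (p:ℚ_[p])^(n+N) := by
      push_cast
      field_simp
      ring
    rw [hid, norm_mul, ← Padic.norm_p_pow]
    calc ‖(a:ℚ_[p]) / (p:ℚ_[p])^n - (m:ℚ_[p]) / (p:ℚ_[p])^N‖ * ‖(p:ℚ_[p])^(n+N)‖
        ≤ 1 * ‖(p:ℚ_[p])^(n+N)‖ := by gcongr
      _ = ‖(p:ℚ_[p])^(n+N)‖ := one_mul _
  obtain ⟨k, hk⟩ := h4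
  have hC : (a:ℂ) / (p:ℂ)^n = (m:ℂ) / (p:ℂ)^N + k := by
    have hk' : (a:ℤ) * p^N - m * p^n = p^(n+N) * k := hk
    have : ((a:ℂ)) * (p:ℂ)^N - (m:ℂ) * (p:ℂ)^n = (p:ℂ)^(n+N) * k := by
      exact_mod_cast congrArg (fun z : ℤ => (z:ℂ)) hk'
    field_simp
    rw [pow_add] at this
    linear_combination this
  rw [hC, mul_add, Complex.exp_add]
  have : Complex.exp (2 * Real.pi * Complex.I * (k:ℂ)) = 1 := by
    rw [show (2 * (Real.pi:ℂ) * Complex.I * (k:ℂ)) = (k:ℂ) * (2 * Real.pi * Complex.I) by ring]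
    exact Complex.exp_int_mul_two_pi_mul_I k
  rw [this, mul_one]

open Polynomial in
lemma gal_sum {ι : Type*} (s : Finset ι) (g : ι → ℕ) (Nn b : ℕ) (hN : Nn ≠ 0)
    (hb : b.Coprime Nn)
    (h : ∑ i ∈ s, Complex.exp (2 * Real.pi * Complex.I / Nn) ^ (g i) = 0) :
    ∑ i ∈ s, Complex.exp (2 * Real.pi * Complex.I / Nn) ^ (b * g i) = 0 := by
  set ζ := Complex.exp (2 * Real.pi * Complex.I / Nn) with hζdef
  have hζ : IsPrimitiveRoot ζ Nn := Complex.isPrimitiveRoot_exp Nn hN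
  have hζb : IsPrimitiveRoot (ζ ^ b) Nn := hζ.pow_of_coprime b hb
  have hpos : 0 < Nn := Nat.pos_of_ne_zero hN
  set f : ℚ[X] := ∑ i ∈ s, X ^ (g i) with hf
  have haev : aeval ζ f = 0 := by
    rw [hf, map_sum]
    simpa using h
  have hdvd : minpoly ℚ ζ ∣ f := minpoly.dvd ℚ ζ haev
  have hmin : minpoly ℚ ζ = minpoly ℚ (ζ ^ b) :=
    (cyclotomic_eq_minpoly_rat hζ hpos).symm.trans (cyclotomic_eq_minpoly_rat hζb hpos)
  obtain ⟨q, hq⟩ := hdvd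
  have haev2 : aeval (ζ ^ b) f = 0 := by
    rw [hq, map_mul, hmin, minpoly.aeval, zero_mul]
  rw [hf, map_sum] at haev2
  simpa [pow_mul] using haev2

lemma finite_inter {p : ℕ} [hp : Fact p.Prime] (E : Set ℚ_[p])
    (hE : ∃ ε > (0:ℝ), ∀ x ∈ E, ∀ y ∈ E, x ≠ y → ε ≤ ‖x - y‖) (r : ℝ) :
    (E ∩ {x : ℚ_[p] | ‖x‖ ≤ r}).Finite := by
  obtain ⟨ε, hε, hsep⟩ := hE
  have hcomp : IsCompact (Metric.closedBall (0:ℚ_[p]) r) := isCompact_closedBall 0 r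
  obtain ⟨t, htfin, htsub⟩ := (EMetric.totallyBounded_iff.mp hcomp.totallyBounded)
    (ENNReal.ofReal (ε/2)) (by simp [ENNReal.ofReal_pos]; linarith)
  set S := E ∩ {x : ℚ_[p] | ‖x‖ ≤ r} with hS
  have hSsub : S ⊆ Metric.closedBall (0:ℚ_[p]) r := by
    intro x hx
    simpa [Metric.mem_closedBall, dist_zero_right] using hx.2
  have hchoice : ∀ x ∈ S, ∃ y ∈ t, x ∈ Metric.eball y (ENNReal.ofReal (ε/2)) := by
    intro x hx
    have := htsub (hSsub hx)
    simpa using this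
  classical
  set F : ℚ_[p] → ℚ_[p] := fun x => if h : x ∈ S then (hchoice x h).choose else 0 with hF
  apply Set.Finite.of_finite_image (f := F)
  · apply htfin.subset
    rintro _ ⟨x, hx, rfl⟩
    simp only [hF, dif_pos hx]
    exact (hchoice x hx).choose_spec.1
  · intro x hx x' hx' hxy
    by_contra hne
    have h1 := (hchoice x hx).choose_spec.2
    have h2 := (hchoice x' hx').choose_spec.2
    rw [hF] at hxy
    simp only [dif_pos hx, dif_pos hx'] at hxy
    rw [hxy] at h1
    have hd : dist x x' < ε := by
      have d1 := Metric.mem_eball.mp h1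
      have d2 := Metric.mem_eball.mp h2
      have e1 : dist x ((hchoice x' hx').choose) < ε/2 := by
        rw [← ENNReal.ofReal_lt_ofReal_iff (by linarith), ← edist_dist] at *
        exact lt_of_lt_of_le d1 le_rfl
      have e2 : dist x' ((hchoice x' hx').choose) < ε/2 := by
        rw [← ENNReal.ofReal_lt_ofReal_iff (by linarith), ← edist_dist] at *
        exact lt_of_lt_of_le d2 le_rfl
      calc dist x x' ≤ dist x _ + dist x' _ := dist_triangle_right _ _ _
        _ < ε/2 + ε/2 := by gcongr
        _ = ε := by ring
    have := hsep x hx.1 x' hx'.1 hne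
    rw [dist_eq_norm] at hd
    linarith

/-- For a unit `u`, there is a natural `b` (coprime to `p`) such that for every `x`
with `‖x‖ ≤ p^K`, `stdChar p x = e(m/p^K)` and `stdChar p (u*x) = e(b*m/p^K)`. -/
lemma stdChar_unit_mul (K : ℕ) (hK : K ≠ 0) (u : ℚ_[p]) (hu : ‖u‖ = 1) :
    ∃ b : ℕ, ¬ (p ∣ b) ∧ ∀ x : ℚ_[p], ‖x‖ ≤ (p:ℝ)^(K:ℤ) → ∃ m : ℕ,
      stdChar p x = Complex.exp (2 * Real.pi * Complex.I * ((m:ℂ) / (p:ℂ)^K)) ∧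
      stdChar p (u * x) = Complex.exp (2 * Real.pi * Complex.I * (((b*m : ℕ):ℂ) / (p:ℂ)^K)) := by
  have hp1 : (1:ℝ) < p := by exact_mod_cast hp.out.one_lt
  have hp0 : (0:ℝ) < p := by positivity
  set U : ℤ_[p] := ⟨u, le_of_eq hu⟩ with hU
  set b : ℕ := U.appr (2*K) with hb
  have hub : ‖u - (b:ℚ_[p])‖ ≤ (p:ℝ)^(-(2*K:ℕ):ℤ) := by
    have := (PadicInt.norm_le_pow_iff_mem_span_pow (U - (b:ℤ_[p])) (2*K)).mpr
      (PadicInt.appr_spec (2*K) U)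
    rw [PadicInt.norm_def, PadicInt.coe_sub, PadicInt.coe_natCast] at this
    exact_mod_cast this
  refine ⟨b, ?_, ?_⟩
  · intro hdvd
    have hbn : ‖((b:ℤ):ℚ_[p])‖ ≤ (p:ℝ)^(-(1:ℕ):ℤ) := by
      rw [Padic.norm_int_le_pow_iff_dvd]
      exact_mod_cast pow_one (p:ℤ) ▸ (Int.natCast_dvd_natCast.mpr hdvd)
    have hlt : ‖u‖ < 1 := by
      have : u = (u - (b:ℚ_[p])) + (b:ℚ_[p]) := by ring
      rw [this]
      refine lt_of_le_of_lt (Padic.nonarchimedean _ _) ?_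
      apply max_lt
      · refine lt_of_le_of_lt hub ?_
        apply zpow_lt_one_of_neg₀ hp1
        push_cast
        omega
      · refine lt_of_le_of_lt (by exact_mod_cast hbn) ?_
        apply zpow_lt_one_of_neg₀ hp1
        push_cast
    rw [hu] at hlt; exact lt_irrefl _ hlt
  · intro x hx
    -- z = p^K x ∈ ℤ_p
    have hz : ‖(p:ℚ_[p])^K * x‖ ≤ 1 := by
      rw [norm_mul, norm_pow, Padic.norm_p]
      calc ((p:ℝ)⁻¹)^K * ‖x‖ ≤ ((p:ℝ)⁻¹)^K * (p:ℝ)^(K:ℤ) := by gcongr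
        _ = 1 := by
            rw [inv_pow, ← zpow_natCast, ← zpow_neg, ← zpow_add₀ (ne_of_gt hp0)]
            simp
    set Z : ℤ_[p] := ⟨(p:ℚ_[p])^K * x, hz⟩ with hZ
    set m : ℕ := Z.appr K with hm
    have hzm : ‖(p:ℚ_[p])^K * x - (m:ℚ_[p])‖ ≤ (p:ℝ)^(-(K:ℕ):ℤ) := by
      have := (PadicInt.norm_le_pow_iff_mem_span_pow (Z - (m:ℤ_[p])) K).mpr
        (PadicInt.appr_spec K Z)
      rw [PadicInt.norm_def] at this
      exact this
    have hxm : ‖x - (m:ℚ_[p]) / (p:ℚ_[p])^K‖ ≤ 1 := by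
      have hpQ : ((p:ℚ_[p])) ≠ 0 := by exact_mod_cast hp.out.ne_zero
      have hrw : x - (m:ℚ_[p]) / (p:ℚ_[p])^K = ((p:ℚ_[p])^K * x - m) / (p:ℚ_[p])^K := by
        field_simp
      rw [hrw, norm_div, norm_pow, Padic.norm_p]
      calc ‖(p:ℚ_[p])^K * x - (m:ℚ_[p])‖ / ((p:ℝ)⁻¹)^K
          ≤ (p:ℝ)^(-(K:ℕ):ℤ) / ((p:ℝ)⁻¹)^K := by gcongr
        _ = 1 := by
            rw [inv_pow, ← zpow_natCast, ← zpow_neg, div_eq_mul_inv, ← zpow_neg,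
              ← zpow_add₀ (ne_of_gt hp0)]
            simp
    refine ⟨m, ?_, ?_⟩
    · have := stdChar_eq x K (m:ℤ) (by rw [Int.cast_natCast]; exact hxm)
      simpa using this
    · have hbm : ‖u * x - ((b*m : ℕ):ℚ_[p]) / (p:ℚ_[p])^K‖ ≤ 1 := by
        have hrw : u * x - ((b*m : ℕ):ℚ_[p]) / (p:ℚ_[p])^K
            = u * (x - (m:ℚ_[p]) / (p:ℚ_[p])^K) + (u - (b:ℚ_[p])) * ((m:ℚ_[p]) / (p:ℚ_[p])^K) := by
          push_cast
          ring
        rw [hrw]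
        refine le_trans (Padic.nonarchimedean _ _) (max_le ?_ ?_)
        · rw [norm_mul, hu, one_mul]; exact hxm
        · rw [norm_mul, norm_div, norm_pow, Padic.norm_p]
          have hmle : ‖((m:ℕ):ℚ_[p])‖ ≤ 1 := by
            have := Padic.norm_int_le_one (p := p) (m:ℤ)
            simpa using this
          calc ‖u - (b:ℚ_[p])‖ * (‖((m:ℕ):ℚ_[p])‖ / ((p:ℝ)⁻¹)^K)
              ≤ (p:ℝ)^(-(2*K:ℕ):ℤ) * (1 / ((p:ℝ)⁻¹)^K) := by
                gcongr
            _ = (p:ℝ)^(-(K:ℕ):ℤ) := by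
                rw [inv_pow, ← zpow_natCast, ← zpow_neg, one_div, ← zpow_neg,
                  ← zpow_add₀ (ne_of_gt hp0)]
                congr 1
                push_cast
                ring
            _ ≤ 1 := by
                apply zpow_le_one_of_nonpos₀ hp1.le
                omega
      have := stdChar_eq (u*x) K ((b*m : ℕ):ℤ) (by rw [Int.cast_natCast]; exact hbm)
      simpa using this


/-- If `ξ` is a zero of `μ̂_E` for a uniformly discrete `E ⊂ ℚ_p`, then so is every
`ξ'` with `|ξ'|_p = |ξ|_p`: the zero set of `μ̂_E` is a union of spheres centered at 0. -/
theorem stmt14 (p : ℕ) [Fact p.Prime] (E : Set ℚ_[p])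
    (hE : ∃ ε > (0:ℝ), ∀ x ∈ E, ∀ y ∈ E, x ≠ y → ε ≤ ‖x - y‖)
    (ξ : ℚ_[p]) (hξ : IsZeroOfFourierMu p E ξ) :
    ∀ ξ' : ℚ_[p], ‖ξ'‖ = ‖ξ‖ → IsZeroOfFourierMu p E ξ' := by
  intro ξ' hnorm
  have hp1 : (1:ℝ) < p := by exact_mod_cast (Fact.out : p.Prime).one_lt
  have hp0 : (0:ℝ) < p := by positivity
  by_cases hξ0 : ξ = 0
  · have hz : ξ' = ξ := by
      rw [hξ0, norm_zero] at hnorm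
      rw [hξ0]
      exact norm_eq_zero.mp hnorm
    rwa [hz]
  obtain ⟨n₀, h⟩ := hξ
  refine ⟨n₀, ?_⟩
  intro y' hy' n hn
  set u := ξ' / ξ with hudef
  have hu : ‖u‖ = 1 := by
    rw [hudef, norm_div, hnorm, div_self (norm_ne_zero_iff.mpr hξ0)]
  have hune : u ≠ 0 := by
    intro h0; rw [h0, norm_zero] at hu; exact zero_ne_one hu
  set y := y' / u with hydef
  have hyy' : y' = u * y := by
    rw [hydef]; field_simp
  have huξ : u * ξ = ξ' := by
    rw [hudef]; field_simp
  have hy : ‖y - ξ‖ ≤ (p:ℝ) ^ n₀ := by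
    have hrw : y - ξ = (y' - ξ') / u := by
      rw [hydef, ← huξ]; field_simp
    rw [hrw, norm_div, hu, div_one]
    exact hy'
  have h0 := h y hy n hn
  have hfin := finite_inter E hE ((p:ℝ) ^ (-n))
  haveI : Fintype ↥(E ∩ {x : ℚ_[p] | ‖x‖ ≤ (p:ℝ) ^ (-n)}) := hfin.fintype
  rw [tsum_fintype] at h0 ⊢
  set M : ℤ := max (-ξ.valuation) n₀ with hM
  set K : ℕ := (M - n).toNat + 1 with hKdef
  -- bound ‖y * λ‖
  have hybound : ‖y‖ ≤ (p:ℝ) ^ M := by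
    have h1 : y = (y - ξ) + ξ := by ring
    rw [h1]
    refine le_trans (Padic.nonarchimedean _ _) (max_le ?_ ?_)
    · exact le_trans hy (zpow_le_zpow_right₀ hp1.le (le_max_right _ _))
    · rw [Padic.norm_eq_zpow_neg_valuation hξ0]
      exact zpow_le_zpow_right₀ hp1.le (le_max_left _ _)
  have hxbound : ∀ l : ↥(E ∩ {x : ℚ_[p] | ‖x‖ ≤ (p:ℝ) ^ (-n)}),
      ‖y * (l : ℚ_[p])‖ ≤ (p:ℝ) ^ (K:ℤ) := by
    intro l
    have hl : ‖(l : ℚ_[p])‖ ≤ (p:ℝ) ^ (-n) := l.2.2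
    rw [norm_mul]
    calc ‖y‖ * ‖(l : ℚ_[p])‖ ≤ (p:ℝ) ^ M * (p:ℝ) ^ (-n) := by
          apply mul_le_mul hybound hl (norm_nonneg _) (by positivity)
      _ = (p:ℝ) ^ (M - n) := by
          rw [← zpow_add₀ (ne_of_gt hp0)]; ring_nf
      _ ≤ (p:ℝ) ^ (K:ℤ) := by
          apply zpow_le_zpow_right₀ hp1.le
          rw [hKdef]
          push_cast
          have := Int.self_le_toNat (M - n)
          omega
  obtain ⟨b, hbp, hb⟩ := stdChar_unit_mul K (by omega) u hu
  choose m hm1 hm2 using fun l : ↥(E ∩ {x : ℚ_[p] | ‖x‖ ≤ (p:ℝ) ^ (-n)}) =>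
    hb (y * (l : ℚ_[p])) (hxbound l)
  have hpne : p ≠ 0 := (Fact.out : p.Prime).ne_zero
  have hNne : (p ^ K : ℕ) ≠ 0 := pow_ne_zero _ hpne
  set ζ := Complex.exp (2 * Real.pi * Complex.I / ((p ^ K : ℕ) : ℂ)) with hζdef
  have hpow : ∀ c : ℕ, Complex.exp (2 * Real.pi * Complex.I * ((c:ℂ) / (p:ℂ) ^ K)) = ζ ^ c := by
    intro c
    rw [hζdef, ← Complex.exp_nat_mul]
    congr 1
    push_cast
    have : ((p:ℂ)) ^ K ≠ 0 := pow_ne_zero _ (by exact_mod_cast hpne)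
    field_simp
  have hζone : ζ ^ (p ^ K) = 1 := (Complex.isPrimitiveRoot_exp _ hNne).pow_eq_one
  have hinv : ∀ c : ℕ, (ζ ^ c)⁻¹ = ζ ^ (c * (p ^ K - 1)) := by
    intro c
    have hPK : 1 ≤ p ^ K := Nat.one_le_iff_ne_zero.mpr hNne
    have hmul : ζ ^ c * ζ ^ (c * (p ^ K - 1)) = 1 := by
      rw [← pow_add]
      have he : c + c * (p ^ K - 1) = (p ^ K) * c := by
        have h1 : 1 + (p ^ K - 1) = p ^ K := by omega
        calc c + c * (p ^ K - 1) = c * (1 + (p ^ K - 1)) := by ring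
          _ = (p ^ K) * c := by rw [h1]; ring
      rw [he, pow_mul, hζone, one_pow]
    exact inv_eq_of_mul_eq_one_right hmul
  have hcop : b.Coprime (p ^ K) :=
    Nat.Coprime.pow_right _ (((Fact.out : p.Prime).coprime_iff_not_dvd.mpr hbp).symm)
  have h0' : ∑ l : ↥(E ∩ {x : ℚ_[p] | ‖x‖ ≤ (p:ℝ) ^ (-n)}),
      ζ ^ ((m l) * (p ^ K - 1)) = 0 := by
    rw [← h0]
    apply Finset.sum_congr rfl
    intro l _
    rw [hm1 l, hpow, hinv]
  have hgal := gal_sum Finset.univ (fun l => m l * (p ^ K - 1)) (p ^ K) b hNne hcop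
    (by rw [← hζdef]; exact h0')
  rw [← hζdef] at hgal
  calc ∑ l : ↥(E ∩ {x : ℚ_[p] | ‖x‖ ≤ (p:ℝ) ^ (-n)}), (stdChar p (y' * (l:ℚ_[p])))⁻¹
      = ∑ l : ↥(E ∩ {x : ℚ_[p] | ‖x‖ ≤ (p:ℝ) ^ (-n)}), ζ ^ (b * (m l * (p ^ K - 1))) := by
        apply Finset.sum_congr rfl
        intro l _
        rw [hyy', mul_assoc, hm2 l, hpow (b * m l), hinv (b * m l), mul_assoc]
    _ = 0 := hgal
end
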